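/- The limit as m → ∞ (with n = 4m+1) of 4·(∑_{k=1}^{(n-1)/4} (cos((k-1)π/(n-3)) − cos((2k-1)π/(2n-2))) + ∑_{k=(n+3)/4}^{(n-1)/2} (cos((2k-1)π/(2n-2)) − cos((k-1)π/(n-3)))) equals (8 − 8√2 + 2π)/π. -/

import Mathlib

open Real Filter Finset

noncomputable def hfun (x : ℝ) : ℝ := 1 / Real.sin x - 1 / x
noncomputable def Hfun (x : ℝ) : ℝ := (1 - Real.cos x) / Real.sin x

lemma teleA (θ : ℝ) (N : ℕ) :
    2 * Real.sin (θ / 2) * ∑ k ∈ Finset.Icc 1 N, Real.cos (((k : ℝ) - 1) * θ)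
      = Real.sin ((2 * (N : ℝ) - 1) * θ / 2) + Real.sin (θ / 2) := by
  induction N with
  | zero =>
      simp only [Nat.cast_zero]
      rw [show (2 * (0 : ℝ) - 1) * θ / 2 = -(θ / 2) by ring, Real.sin_neg]
      simp
  | succ N ih =>
      rw [Finset.sum_Icc_succ_top (by omega : 1 ≤ N + 1)]
      push_cast
      rw [show (2 * ((N : ℝ) + 1) - 1) * θ / 2 = (N : ℝ) * θ + θ / 2 by ring,
        Real.sin_add]
      rw [show (2 * (N : ℝ) - 1) * θ / 2 = (N : ℝ) * θ - θ / 2 by ring,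
        Real.sin_sub] at ih
      rw [show ((N : ℝ) + 1 - 1) * θ = (N : ℝ) * θ by ring]
      linear_combination ih

lemma teleB (φ : ℝ) (N : ℕ) :
    2 * Real.sin φ * ∑ k ∈ Finset.Icc 1 N, Real.cos ((2 * (k : ℝ) - 1) * φ)
      = Real.sin (2 * (N : ℝ) * φ) := by
  induction N with
  | zero => simp
  | succ N ih =>
      rw [Finset.sum_Icc_succ_top (by omega : 1 ≤ N + 1)]
      push_cast
      rw [show 2 * ((N : ℝ) + 1) * φ = (2 * (N : ℝ) + 1) * φ + φ by ring, Real.sin_add]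
      rw [show 2 * (N : ℝ) * φ = (2 * (N : ℝ) + 1) * φ - φ by ring, Real.sin_sub] at ih
      rw [show (2 * ((N : ℝ) + 1) - 1) * φ = (2 * (N : ℝ) + 1) * φ by ring]
      linear_combination ih

lemma keylem (m : ℕ) (hm : 1 ≤ m) :
    (4 : ℝ) *
        ((∑ k ∈ Finset.Icc 1 ((4 * m + 1 - 1) / 4),
            (Real.cos (((k : ℝ) - 1) * Real.pi / ((4 * (m : ℝ) + 1) - 3)) -
              Real.cos ((2 * (k : ℝ) - 1) * Real.pi / (2 * (4 * (m : ℝ) + 1) - 2)))) +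
          ∑ k ∈ Finset.Icc ((4 * m + 1 + 3) / 4) ((4 * m + 1 - 1) / 2),
            (Real.cos ((2 * (k : ℝ) - 1) * Real.pi / (2 * (4 * (m : ℝ) + 1) - 2)) -
              Real.cos (((k : ℝ) - 1) * Real.pi / ((4 * (m : ℝ) + 1) - 3))))
    = 2 + 2 * Hfun (Real.pi / (8 * (m : ℝ) - 4))
        + 2 * (Real.sqrt 2 - 1) *
          (hfun (Real.pi / (8 * (m : ℝ) - 4)) - hfun (Real.pi / (8 * (m : ℝ))))
        - 8 * (Real.sqrt 2 - 1) / Real.pi := by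
  have hm1 : (1 : ℝ) ≤ (m : ℝ) := by exact_mod_cast hm
  have hm0 : (m : ℝ) ≠ 0 := by linarith
  have ha : (0 : ℝ) < 4 * (m : ℝ) - 2 := by linarith
  have hb : (0 : ℝ) < 8 * (m : ℝ) - 4 := by linarith
  have hc : (0 : ℝ) < 8 * (m : ℝ) := by linarith
  -- rewrite nat index bounds
  have h1 : (4 * m + 1 - 1) / 4 = m := by omega
  have h2 : (4 * m + 1 + 3) / 4 = m + 1 := by omega
  have h3 : (4 * m + 1 - 1) / 2 = 2 * m := by omega
  rw [h1, h2, h3]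
  -- rewrite real denominators and angles
  simp only [show (4 * (m : ℝ) + 1) - 3 = 4 * (m : ℝ) - 2 from by ring,
    show 2 * (4 * (m : ℝ) + 1) - 2 = 8 * (m : ℝ) from by ring, mul_div_assoc]
  set θ : ℝ := Real.pi / (4 * (m : ℝ) - 2) with hθ
  set φ : ℝ := Real.pi / (8 * (m : ℝ)) with hφ
  have hθ2 : θ / 2 = Real.pi / (8 * (m : ℝ) - 4) := by
    rw [hθ, div_div]
    congr 1
    ring
  set δ : ℝ := Real.pi / (8 * (m : ℝ) - 4) with hδ
  -- positivity of sines
  have hδpos : 0 < δ := by rw [hδ]; positivity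
  have hδlt : δ < Real.pi := by
    rw [hδ, div_lt_iff₀ hb]
    nlinarith [Real.pi_pos]
  have hs : 0 < Real.sin δ := Real.sin_pos_of_pos_of_lt_pi hδpos hδlt
  have hφpos : 0 < φ := by rw [hφ]; positivity
  have hφlt : φ < Real.pi := by
    rw [hφ, div_lt_iff₀ hc]
    nlinarith [Real.pi_pos]
  have ht : 0 < Real.sin φ := Real.sin_pos_of_pos_of_lt_pi hφpos hφlt
  -- split sums
  have e1 : Finset.Icc 1 m = Finset.Ioc 0 m := by
    ext x; simp only [Finset.mem_Icc, Finset.mem_Ioc]; omega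
  have e2 : Finset.Icc (m + 1) (2 * m) = Finset.Ioc m (2 * m) := by
    ext x; simp only [Finset.mem_Icc, Finset.mem_Ioc]; omega
  have e3 : Finset.Icc 1 (2 * m) = Finset.Ioc 0 (2 * m) := by
    ext x; simp only [Finset.mem_Icc, Finset.mem_Ioc]; omega
  have hsplitA : ∑ k ∈ Finset.Icc 1 m, Real.cos (((k : ℝ) - 1) * θ)
      + ∑ k ∈ Finset.Icc (m + 1) (2 * m), Real.cos (((k : ℝ) - 1) * θ)
      = ∑ k ∈ Finset.Icc 1 (2 * m), Real.cos (((k : ℝ) - 1) * θ) := by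
    rw [e1, e2, e3]
    exact Finset.sum_Ioc_consecutive _ (Nat.zero_le m) (by omega)
  have hsplitB : ∑ k ∈ Finset.Icc 1 m, Real.cos ((2 * (k : ℝ) - 1) * φ)
      + ∑ k ∈ Finset.Icc (m + 1) (2 * m), Real.cos ((2 * (k : ℝ) - 1) * φ)
      = ∑ k ∈ Finset.Icc 1 (2 * m), Real.cos ((2 * (k : ℝ) - 1) * φ) := by
    rw [e1, e2, e3]
    exact Finset.sum_Ioc_consecutive _ (Nat.zero_le m) (by omega)
  -- closed forms for the four partial sums
  have tA1 := teleA θ m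
  rw [hθ2, show (2 * (m : ℝ) - 1) * θ / 2 = (2 * (m : ℝ) - 1) * (θ / 2) by ring, hθ2] at tA1
  rw [show (2 * (m : ℝ) - 1) * (Real.pi / (8 * (m : ℝ) - 4)) = Real.pi / 4 from by
      rw [mul_div_assoc', div_eq_div_iff hb.ne' (by norm_num)]; ring, Real.sin_pi_div_four] at tA1
  have tA2 := teleA θ (2 * m)
  push_cast at tA2
  rw [hθ2, show (2 * (2 * (m : ℝ)) - 1) * θ / 2 = (4 * (m : ℝ) - 1) * (θ / 2) by ring,
    hθ2] at tA2
  rw [show (4 * (m : ℝ) - 1) * (Real.pi / (8 * (m : ℝ) - 4))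
      = Real.pi / 2 + Real.pi / (8 * (m : ℝ) - 4) from by
        rw [mul_div_assoc', div_add_div _ _ (by norm_num) hb.ne', div_eq_div_iff hb.ne' (by positivity)]; ring,
    Real.sin_add, Real.sin_pi_div_two, Real.cos_pi_div_two] at tA2
  have tB1 := teleB φ m
  rw [show 2 * (m : ℝ) * φ = Real.pi / 4 from by rw [hφ]; field_simp; ring,
    Real.sin_pi_div_four] at tB1
  have tB2 := teleB φ (2 * m)
  push_cast at tB2
  rw [show 2 * (2 * (m : ℝ)) * φ = Real.pi / 2 from by rw [hφ]; field_simp; ring,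
    Real.sin_pi_div_two] at tB2
  -- partial sums as fractions
  have eA1 : ∑ k ∈ Finset.Icc 1 m, Real.cos (((k : ℝ) - 1) * θ)
      = (Real.sqrt 2 / 2 + Real.sin δ) / (2 * Real.sin δ) := by
    rw [eq_div_iff (by positivity)]; linear_combination tA1
  have eA2 : ∑ k ∈ Finset.Icc 1 (2 * m), Real.cos (((k : ℝ) - 1) * θ)
      = (Real.cos δ + Real.sin δ) / (2 * Real.sin δ) := by
    rw [eq_div_iff (by positivity)]; linear_combination tA2
  have eB1 : ∑ k ∈ Finset.Icc 1 m, Real.cos ((2 * (k : ℝ) - 1) * φ)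
      = (Real.sqrt 2 / 2) / (2 * Real.sin φ) := by
    rw [eq_div_iff (by positivity)]; linear_combination tB1
  have eB2 : ∑ k ∈ Finset.Icc 1 (2 * m), Real.cos ((2 * (k : ℝ) - 1) * φ)
      = 1 / (2 * Real.sin φ) := by
    rw [eq_div_iff (by positivity)]; linear_combination tB2
  have eA3 : ∑ k ∈ Finset.Icc (m + 1) (2 * m), Real.cos (((k : ℝ) - 1) * θ)
      = (Real.cos δ + Real.sin δ) / (2 * Real.sin δ)
        - (Real.sqrt 2 / 2 + Real.sin δ) / (2 * Real.sin δ) := by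
    rw [← eA1, ← eA2]; linarith [hsplitA]
  have eB3 : ∑ k ∈ Finset.Icc (m + 1) (2 * m), Real.cos ((2 * (k : ℝ) - 1) * φ)
      = 1 / (2 * Real.sin φ) - (Real.sqrt 2 / 2) / (2 * Real.sin φ) := by
    rw [← eB1, ← eB2]; linarith [hsplitB]
  rw [Finset.sum_sub_distrib, Finset.sum_sub_distrib, eA1, eB1, eA3, eB3]
  unfold Hfun hfun
  have hinv1 : 1 / δ = (8 * (m : ℝ) - 4) / Real.pi := by rw [hδ, one_div_div]
  have hinv2 : 1 / φ = (8 * (m : ℝ)) / Real.pi := by rw [hφ, one_div_div]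
  rw [hinv1, hinv2]
  have hπ : Real.pi ≠ 0 := Real.pi_ne_zero
  field_simp
  ring

lemma tendsto_hfun : Tendsto hfun (nhdsWithin 0 (Set.Ioi 0)) (nhds 0) := by
  apply squeeze_zero' (g := fun x : ℝ => x)
  · filter_upwards [Ioc_mem_nhdsGT (by norm_num : (0:ℝ) < 1)] with x hx
    have hx0 := hx.1
    have hx1 := hx.2
    have hcube := Real.sin_gt_sub_cube hx0
    have hxc : x ^ 3 ≤ x := by
      nlinarith [mul_nonneg (mul_nonneg hx0.le (sub_nonneg.2 hx1)) (by linarith : (0:ℝ) ≤ 1 + x)]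
    have h34 : 3 * x / 4 ≤ Real.sin x := by nlinarith
    have hsp : 0 < Real.sin x := by nlinarith
    have hsl : Real.sin x ≤ x := (Real.sin_lt hx0).le
    rw [hfun, sub_nonneg]
    exact one_div_le_one_div_of_le hsp hsl
  · filter_upwards [Ioc_mem_nhdsGT (by norm_num : (0:ℝ) < 1)] with x hx
    have hx0 := hx.1
    have hx1 := hx.2
    have hcube := Real.sin_gt_sub_cube hx0
    have hxc : x ^ 3 ≤ x := by
      nlinarith [mul_nonneg (mul_nonneg hx0.le (sub_nonneg.2 hx1)) (by linarith : (0:ℝ) ≤ 1 + x)]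
    have h34 : 3 * x / 4 ≤ Real.sin x := by nlinarith
    have hsp : 0 < Real.sin x := by nlinarith
    have hsl : Real.sin x ≤ x := (Real.sin_lt hx0).le
    have heq : hfun x = (x - Real.sin x) / (x * Real.sin x) := by
      rw [hfun]
      field_simp
    rw [heq]
    have hb1 : (x - Real.sin x) / (x * Real.sin x) ≤ (x ^ 3 / 4) / (3 * x ^ 2 / 4) := by
      apply div_le_div₀ (by positivity) (by nlinarith) (by positivity)
      nlinarith [mul_le_mul_of_nonneg_left h34 hx0.le]
    have hb2 : (x ^ 3 / 4) / (3 * x ^ 2 / 4) = x / 3 := by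
      field_simp
    rw [hb2] at hb1
    linarith
  · exact tendsto_id.mono_left nhdsWithin_le_nhds

lemma tendsto_Hfun : Tendsto Hfun (nhdsWithin 0 (Set.Ioi 0)) (nhds 0) := by
  apply squeeze_zero' (g := fun x : ℝ => x)
  · filter_upwards [Ioc_mem_nhdsGT (by norm_num : (0:ℝ) < 1)] with x hx
    have hx0 := hx.1
    have hx1 := hx.2
    have hcube := Real.sin_gt_sub_cube hx0
    have hxc : x ^ 3 ≤ x := by
      nlinarith [mul_nonneg (mul_nonneg hx0.le (sub_nonneg.2 hx1)) (by linarith : (0:ℝ) ≤ 1 + x)]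
    have hsp : 0 < Real.sin x := by nlinarith
    rw [Hfun]
    apply div_nonneg _ hsp.le
    linarith [Real.cos_le_one x]
  · filter_upwards [Ioc_mem_nhdsGT (by norm_num : (0:ℝ) < 1)] with x hx
    have hx0 := hx.1
    have hx1 := hx.2
    have hcube := Real.sin_gt_sub_cube hx0
    have hxc : x ^ 3 ≤ x := by
      nlinarith [mul_nonneg (mul_nonneg hx0.le (sub_nonneg.2 hx1)) (by linarith : (0:ℝ) ≤ 1 + x)]
    have h34 : 3 * x / 4 ≤ Real.sin x := by nlinarith
    have hsp : 0 < Real.sin x := by nlinarith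
    rw [Hfun]
    have hb1 : (1 - Real.cos x) / Real.sin x ≤ (x ^ 2 / 2) / (3 * x / 4) := by
      apply div_le_div₀ (by positivity) _ (by positivity) h34
      linarith [Real.one_sub_sq_div_two_le_cos (x := x)]
    have hb2 : (x ^ 2 / 2) / (3 * x / 4) = 2 * x / 3 := by
      field_simp
      ring
    rw [hb2] at hb1
    linarith
  · exact tendsto_id.mono_left nhdsWithin_le_nhds

lemma tendsto_delta : Tendsto (fun m : ℕ => Real.pi / (8 * (m : ℝ) - 4)) atTop
    (nhdsWithin 0 (Set.Ioi 0)) := by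
  apply tendsto_nhdsWithin_of_tendsto_nhds_of_eventually_within
  · apply Filter.Tendsto.div_atTop (tendsto_const_nhds)
    apply tendsto_atTop_add_const_right
    exact (tendsto_natCast_atTop_atTop (R := ℝ)).const_mul_atTop (by norm_num)
  · filter_upwards [eventually_ge_atTop 1] with m hm
    have : (1 : ℝ) ≤ (m : ℝ) := by exact_mod_cast hm
    have : (0 : ℝ) < 8 * (m : ℝ) - 4 := by linarith
    exact Set.mem_Ioi.2 (by positivity)

lemma tendsto_phi : Tendsto (fun m : ℕ => Real.pi / (8 * (m : ℝ))) atTop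
    (nhdsWithin 0 (Set.Ioi 0)) := by
  apply tendsto_nhdsWithin_of_tendsto_nhds_of_eventually_within
  · apply Filter.Tendsto.div_atTop (tendsto_const_nhds)
    exact (tendsto_natCast_atTop_atTop (R := ℝ)).const_mul_atTop (by norm_num)
  · filter_upwards [eventually_ge_atTop 1] with m hm
    have : (1 : ℝ) ≤ (m : ℝ) := by exact_mod_cast hm
    exact Set.mem_Ioi.2 (by positivity)

theorem stmt9 :
    Tendsto (fun m : ℕ =>
      (4 : ℝ) *
        ((∑ k ∈ Finset.Icc 1 ((4 * m + 1 - 1) / 4),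
            (Real.cos (((k : ℝ) - 1) * Real.pi / ((4 * (m : ℝ) + 1) - 3)) -
              Real.cos ((2 * (k : ℝ) - 1) * Real.pi / (2 * (4 * (m : ℝ) + 1) - 2)))) +
          ∑ k ∈ Finset.Icc ((4 * m + 1 + 3) / 4) ((4 * m + 1 - 1) / 2),
            (Real.cos ((2 * (k : ℝ) - 1) * Real.pi / (2 * (4 * (m : ℝ) + 1) - 2)) -
              Real.cos (((k : ℝ) - 1) * Real.pi / ((4 * (m : ℝ) + 1) - 3)))))
      atTop (nhds ((8 - 8 * Real.sqrt 2 + 2 * Real.pi) / Real.pi)) := by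
  have heq : (fun m : ℕ => 2 + 2 * Hfun (Real.pi / (8 * (m : ℝ) - 4))
        + 2 * (Real.sqrt 2 - 1) *
          (hfun (Real.pi / (8 * (m : ℝ) - 4)) - hfun (Real.pi / (8 * (m : ℝ))))
        - 8 * (Real.sqrt 2 - 1) / Real.pi) =ᶠ[atTop]
      (fun m : ℕ =>
      (4 : ℝ) *
        ((∑ k ∈ Finset.Icc 1 ((4 * m + 1 - 1) / 4),
            (Real.cos (((k : ℝ) - 1) * Real.pi / ((4 * (m : ℝ) + 1) - 3)) -
              Real.cos ((2 * (k : ℝ) - 1) * Real.pi / (2 * (4 * (m : ℝ) + 1) - 2)))) +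
          ∑ k ∈ Finset.Icc ((4 * m + 1 + 3) / 4) ((4 * m + 1 - 1) / 2),
            (Real.cos ((2 * (k : ℝ) - 1) * Real.pi / (2 * (4 * (m : ℝ) + 1) - 2)) -
              Real.cos (((k : ℝ) - 1) * Real.pi / ((4 * (m : ℝ) + 1) - 3))))) := by
    filter_upwards [eventually_ge_atTop 1] with m hm
    exact (keylem m hm).symm
  refine Tendsto.congr' heq ?_
  have hval : (8 - 8 * Real.sqrt 2 + 2 * Real.pi) / Real.pi
      = 2 + 2 * (0 : ℝ) + 2 * (Real.sqrt 2 - 1) * (0 - 0) - 8 * (Real.sqrt 2 - 1) / Real.pi := by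
    field_simp
    ring
  rw [hval]
  have t1 : Tendsto (fun m : ℕ => Hfun (Real.pi / (8 * (m : ℝ) - 4))) atTop (nhds 0) :=
    tendsto_Hfun.comp tendsto_delta
  have t2 : Tendsto (fun m : ℕ => hfun (Real.pi / (8 * (m : ℝ) - 4))) atTop (nhds 0) :=
    tendsto_hfun.comp tendsto_delta
  have t3 : Tendsto (fun m : ℕ => hfun (Real.pi / (8 * (m : ℝ)))) atTop (nhds 0) :=
    tendsto_hfun.comp tendsto_phi
  exact ((tendsto_const_nhds.add (t1.const_mul 2)).add ((t2.sub t3).const_mul _)).sub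
    tendsto_const_nhds
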